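/- Let H be a real Hilbert space, F : H → H a monotone map, x⁰ ∈ H, and r₀ > 0 such that F is bounded on the closed ball S(r₀, x⁰) with c₀ = sup{‖F(ξ)‖ : ξ ∈ S(r₀, x⁰)} < ∞. Then for every x ∈ H, ⟨F(x), x - x⁰⟩ ≥ r₀ ‖F(x)‖ - c₀ (‖x - x⁰‖ + r₀). -/

import Mathlib

/-- For a monotone F : H → H bounded by c₀ on the closed ball S(r₀, x⁰),
⟨F x, x - x⁰⟩ ≥ r₀‖F x‖ - c₀(‖x - x⁰‖ + r₀) for all x. -/
theorem monotone_lower_bound_hilbert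
    {H : Type*} [NormedAddCommGroup H] [InnerProductSpace ℝ H] [CompleteSpace H]
    (F : H → H) (hmono : ∀ x y : H, (inner ℝ (F x - F y) (x - y) : ℝ) ≥ 0)
    (x0 : H) (r0 : ℝ) (hr0 : 0 < r0) (c0 : ℝ)
    (hc0 : ∀ ξ ∈ Metric.closedBall x0 r0, ‖F ξ‖ ≤ c0) :
    ∀ x : H, (inner ℝ (F x) (x - x0) : ℝ) ≥ r0 * ‖F x‖ - c0 * (‖x - x0‖ + r0) := by
  intro x
  have hc0nn : 0 ≤ c0 :=
    le_trans (norm_nonneg _) (hc0 x0 (Metric.mem_closedBall_self hr0.le))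
  by_cases hFx : F x = 0
  · simp only [hFx, inner_zero_left, norm_zero]
    nlinarith [norm_nonneg (x - x0)]
  · have hn : 0 < ‖F x‖ := norm_pos_iff.mpr hFx
    set u : H := (r0 / ‖F x‖) • F x with hu
    have hnu : ‖u‖ = r0 := by
      rw [hu, norm_smul, Real.norm_eq_abs, abs_of_pos (div_pos hr0 hn)]
      field_simp
    set ξ : H := x0 + u with hξ
    have hξmem : ξ ∈ Metric.closedBall x0 r0 := by
      simp [Metric.mem_closedBall, dist_eq_norm, hξ, hnu]
    have hFξ : ‖F ξ‖ ≤ c0 := hc0 ξ hξmem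
    have hmon := hmono x ξ
    have hxi : x - ξ = (x - x0) - u := by rw [hξ]; abel
    have h1 : (inner ℝ (F x) (x - ξ) : ℝ) = inner ℝ (F x) (x - x0) - r0 * ‖F x‖ := by
      rw [hxi, inner_sub_right, hu, real_inner_smul_right, real_inner_self_eq_norm_sq]
      field_simp
    have h2 : (inner ℝ (F ξ) (x - ξ) : ℝ) ≥ -(c0 * (‖x - x0‖ + r0)) := by
      have := abs_real_inner_le_norm (F ξ) (x - ξ)
      have hnx : ‖x - ξ‖ ≤ ‖x - x0‖ + r0 := by
        rw [hxi]
        calc ‖x - x0 - u‖ ≤ ‖x - x0‖ + ‖u‖ := norm_sub_le _ _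
          _ = ‖x - x0‖ + r0 := by rw [hnu]
      nlinarith [neg_abs_le ((inner ℝ (F ξ) (x - ξ) : ℝ)), norm_nonneg (x - ξ),
        norm_nonneg (x - x0)]
    have hmon' : (inner ℝ (F x) (x - ξ) : ℝ) ≥ inner ℝ (F ξ) (x - ξ) := by
      have := hmono x ξ
      rw [inner_sub_left] at this
      linarith
    rw [h1] at hmon'
    linarith
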